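/- The function f(t) = (1+t²)Φ(-t) - tφ(t) satisfies f(0) = 1/2, f is strictly decreasing on (0,∞), and f(t) → 0 as t → ∞. Consequently, for every δ ∈ (0,1) the equation f(t) = δ/2 has a unique positive solution α₀. -/

import Mathlib

noncomputable def stdNormalPDF (x : ℝ) : ℝ := Real.exp (-x ^ 2 / 2) / Real.sqrt (2 * Real.pi)

noncomputable def stdNormalCDF (x : ℝ) : ℝ := ∫ t in Set.Iic x, stdNormalPDF t

noncomputable def ffun (t : ℝ) : ℝ := (1 + t ^ 2) * stdNormalCDF (-t) - t * stdNormalPDF t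

open Real MeasureTheory Set Filter

lemma pdf_eq (x : ℝ) :
    stdNormalPDF x = (Real.sqrt (2 * Real.pi))⁻¹ * Real.exp (-(1/2) * x ^ 2) := by
  unfold stdNormalPDF
  rw [div_eq_inv_mul]
  ring_nf

lemma pdf_pos (x : ℝ) : 0 < stdNormalPDF x := by
  unfold stdNormalPDF
  have : 0 < Real.sqrt (2 * Real.pi) := Real.sqrt_pos.2 (by positivity)
  positivity

lemma pdf_cont : Continuous stdNormalPDF := by
  unfold stdNormalPDF
  fun_prop

lemma pdf_even (x : ℝ) : stdNormalPDF (-x) = stdNormalPDF x := by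
  unfold stdNormalPDF
  rw [neg_sq]

lemma pdf_integrable : Integrable stdNormalPDF := by
  have h := (integrable_exp_neg_mul_sq (by norm_num : (0:ℝ) < 1/2)).const_mul
    (Real.sqrt (2 * Real.pi))⁻¹
  exact h.congr (by filter_upwards with x using (pdf_eq x).symm)

lemma pdf_integral : ∫ x : ℝ, stdNormalPDF x = 1 := by
  simp_rw [pdf_eq]
  rw [MeasureTheory.integral_const_mul, integral_gaussian]
  have h1 : Real.pi / (1/2 : ℝ) = 2 * Real.pi := by ring
  rw [h1]
  exact inv_mul_cancel₀ (by positivity)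

lemma pdf_intOn (s : Set ℝ) : IntegrableOn stdNormalPDF s := pdf_integrable.integrableOn

lemma cdf_neg (t : ℝ) : stdNormalCDF (-t) = ∫ x in Ioi t, stdNormalPDF x := by
  have := integral_comp_neg_Ioi t stdNormalPDF
  simp_rw [pdf_even] at this
  rw [stdNormalCDF, ← this]

lemma cdf_nonneg (y : ℝ) : 0 ≤ stdNormalCDF y :=
  setIntegral_nonneg measurableSet_Iic (fun x _ => (pdf_pos x).le)

lemma cdf_zero : stdNormalCDF 0 = 1 / 2 := by
  have h1 : stdNormalCDF 0 + stdNormalCDF 0 = 1 := by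
    nth_rewrite 2 [show (0:ℝ) = -0 by norm_num]
    rw [cdf_neg]
    rw [show (stdNormalCDF 0 : ℝ) = ∫ x in Iic (0:ℝ), stdNormalPDF x from rfl]
    rw [intervalIntegral.integral_Iic_add_Ioi (pdf_intOn _) (pdf_intOn _)]
    exact pdf_integral
  linarith

lemma pdf_tendsto : Filter.Tendsto stdNormalPDF Filter.atTop (nhds 0) := by
  have h1 : Tendsto (fun t : ℝ => -t ^ 2 / 2) atTop atBot := by
    apply Tendsto.atBot_div_const (by norm_num)
    exact tendsto_neg_atBot_iff.2 (tendsto_pow_atTop (by norm_num))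
  have h2 := (Real.tendsto_exp_atBot.comp h1).div_const (Real.sqrt (2 * Real.pi))
  have : stdNormalPDF = fun t => Real.exp (-t ^ 2 / 2) / Real.sqrt (2 * Real.pi) := rfl
  rw [this]
  simpa [Function.comp_def] using h2

lemma pdf_hasDeriv (x : ℝ) : HasDerivAt stdNormalPDF (-x * stdNormalPDF x) x := by
  have h1 : HasDerivAt (fun y : ℝ => -y ^ 2 / 2) (-x) x := by
    have := ((hasDerivAt_pow 2 x).neg).div_const 2
    refine this.congr_deriv ?_
    push_cast
    ring
  have h2 := (h1.exp).div_const (Real.sqrt (2 * Real.pi))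
  refine h2.congr_deriv ?_
  unfold stdNormalPDF
  ring

lemma cdf_hasDeriv (x : ℝ) : HasDerivAt stdNormalCDF (stdNormalPDF x) x := by
  have key : stdNormalCDF = fun y => stdNormalCDF 0 + ∫ u in (0:ℝ)..y, stdNormalPDF u := by
    funext y
    have h := intervalIntegral.integral_Iic_sub_Iic (μ := volume) (f := stdNormalPDF)
      (pdf_intOn (Iic 0)) (pdf_intOn (Iic y))
    have h2 : stdNormalCDF y - stdNormalCDF 0 = ∫ u in (0:ℝ)..y, stdNormalPDF u := h
    linarith
  rw [key]
  exact ((pdf_cont.integral_hasStrictDerivAt 0 x).hasDerivAt).const_add _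

lemma integral_x_pdf (t : ℝ) : ∫ x in Ioi t, x * stdNormalPDF x = stdNormalPDF t := by
  have hderiv : ∀ x ∈ Ici t, HasDerivAt (fun y => -stdNormalPDF y) (x * stdNormalPDF x) x := by
    intro x _
    have := (pdf_hasDeriv x).neg
    refine this.congr_deriv ?_
    ring
  have hint : IntegrableOn (fun x => x * stdNormalPDF x) (Ioi t) := by
    have h := (integrable_mul_exp_neg_mul_sq (by norm_num : (0:ℝ) < 1/2)).const_mul
      (Real.sqrt (2 * Real.pi))⁻¹
    refine (h.congr ?_).integrableOn
    filter_upwards with x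
    rw [pdf_eq]
    ring
  have hlim : Tendsto (fun y => -stdNormalPDF y) atTop (nhds 0) := by
    simpa using pdf_tendsto.neg
  have := integral_Ioi_of_hasDerivAt_of_tendsto' hderiv hint hlim
  simpa using this

lemma tail_bound {t : ℝ} (ht : 0 < t) : t * stdNormalCDF (-t) < stdNormalPDF t := by
  have hint : IntegrableOn (fun x => x * stdNormalPDF x) (Ioi t) := by
    have h := (integrable_mul_exp_neg_mul_sq (by norm_num : (0:ℝ) < 1/2)).const_mul
      (Real.sqrt (2 * Real.pi))⁻¹
    refine (h.congr ?_).integrableOn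
    filter_upwards with x
    rw [pdf_eq]
    ring
  have hint2 : IntegrableOn (fun x => (x - t) * stdNormalPDF x) (Ioi t) := by
    have h := hint.sub ((pdf_intOn (Ioi t)).const_mul t)
    exact h.congr (Filter.Eventually.of_forall fun x => by simp [Pi.sub_apply]; ring)
  have key : 0 < ∫ x in Ioi t, (x - t) * stdNormalPDF x := by
    rw [setIntegral_pos_iff_support_of_nonneg_ae]
    · refine lt_of_lt_of_le ?_ (measure_mono (s := Ioi t) (fun x hx => ?_))
      · simp
      · refine ⟨?_, hx⟩
        have hx' : t < x := hx
        exact ne_of_gt (mul_pos (by linarith) (pdf_pos x))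
    · rw [Filter.EventuallyLE, ae_restrict_iff' measurableSet_Ioi]
      filter_upwards with x hx
      have hx' : t < x := hx
      exact mul_nonneg (by linarith) (pdf_pos x).le
    · exact hint2
  have heq : ∫ x in Ioi t, (x - t) * stdNormalPDF x
      = stdNormalPDF t - t * stdNormalCDF (-t) := by
    have h1 : ∀ x : ℝ, (x - t) * stdNormalPDF x
        = x * stdNormalPDF x - t * stdNormalPDF x := fun x => by ring
    simp_rw [h1]
    rw [MeasureTheory.integral_sub hint ((pdf_intOn (Ioi t)).const_mul t),
      MeasureTheory.integral_const_mul, integral_x_pdf, cdf_neg]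
  linarith

lemma ffun_hasDeriv (t : ℝ) :
    HasDerivAt ffun (2 * t * stdNormalCDF (-t) - 2 * stdNormalPDF t) t := by
  have h1 : HasDerivAt (fun y : ℝ => stdNormalCDF (-y)) (-stdNormalPDF t) t := by
    have := (cdf_hasDeriv (-t)).comp t (hasDerivAt_neg t)
    simpa [pdf_even, Function.comp_def] using this
  have h2 : HasDerivAt (fun y : ℝ => 1 + y ^ 2) (2 * t) t := by
    have := (hasDerivAt_pow 2 t).const_add 1
    simpa using this
  have h3 := h2.mul h1
  have h4 := (hasDerivAt_id t).mul (pdf_hasDeriv t)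
  have h5 := h3.sub h4
  refine h5.congr_deriv ?_
  simp only [id_eq]
  ring

lemma ffun_cont : Continuous ffun :=
  continuous_iff_continuousAt.2 fun t => (ffun_hasDeriv t).continuousAt

lemma ffun_zero : ffun 0 = 1 / 2 := by
  unfold ffun
  rw [neg_zero, cdf_zero]
  ring

lemma ffun_anti : StrictAntiOn ffun (Set.Ioi 0) := by
  apply strictAntiOn_of_deriv_neg (convex_Ioi 0) ffun_cont.continuousOn
  intro x hx
  rw [interior_Ioi] at hx
  rw [(ffun_hasDeriv x).deriv]
  have := tail_bound hx
  linarith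

lemma ffun_tendsto : Tendsto ffun atTop (nhds 0) := by
  have htpdf : Tendsto (fun t : ℝ => t * stdNormalPDF t) atTop (nhds 0) := by
    have h1 : Tendsto (fun t : ℝ => (Real.sqrt (2 * Real.pi))⁻¹ * (t ^ 1 * Real.exp (-t)))
        atTop (nhds 0) := by
      have := (Real.tendsto_pow_mul_exp_neg_atTop_nhds_zero 1).const_mul
        (Real.sqrt (2 * Real.pi))⁻¹
      simpa using this
    have h2 : Tendsto (fun t : ℝ => (0:ℝ)) atTop (nhds 0) := tendsto_const_nhds
    apply tendsto_of_tendsto_of_tendsto_of_le_of_le' h2 h1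
    · filter_upwards [eventually_ge_atTop (0:ℝ)] with t ht
      exact mul_nonneg ht (pdf_pos t).le
    · filter_upwards [eventually_ge_atTop (2:ℝ)] with t ht
      have hle : Real.exp (-t ^ 2 / 2) ≤ Real.exp (-t) := by
        apply Real.exp_le_exp.2
        nlinarith
      have ht0 : (0:ℝ) ≤ t := by linarith
      calc t * stdNormalPDF t = t * (Real.exp (-t ^ 2 / 2) / Real.sqrt (2 * Real.pi)) := rfl
        _ ≤ t * (Real.exp (-t) / Real.sqrt (2 * Real.pi)) := by
            have hs : (0:ℝ) < Real.sqrt (2 * Real.pi) := Real.sqrt_pos.2 (by positivity)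
            gcongr
        _ = (Real.sqrt (2 * Real.pi))⁻¹ * (t ^ 1 * Real.exp (-t)) := by ring
  have hpdf0 : Tendsto stdNormalPDF atTop (nhds 0) := pdf_tendsto
  have hlow : Tendsto (fun t : ℝ => -(t * stdNormalPDF t)) atTop (nhds 0) := by
    simpa using htpdf.neg
  apply tendsto_of_tendsto_of_tendsto_of_le_of_le' hlow hpdf0
  · filter_upwards [eventually_ge_atTop (0:ℝ)] with t ht
    have h1 : 0 ≤ (1 + t ^ 2) * stdNormalCDF (-t) :=
      mul_nonneg (by positivity) (cdf_nonneg _)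
    unfold ffun
    linarith
  · filter_upwards [eventually_ge_atTop (1:ℝ)] with t ht
    have htb := tail_bound (by linarith : (0:ℝ) < t)
    have hC := cdf_nonneg (-t)
    have h5 : t ^ 2 * stdNormalCDF (-t) ≤ t * stdNormalPDF t := by nlinarith
    have h6 : stdNormalCDF (-t) ≤ stdNormalPDF t := by nlinarith
    unfold ffun
    nlinarith

theorem ffun_props :
    ffun 0 = 1 / 2 ∧ StrictAntiOn ffun (Set.Ioi 0) ∧
    Filter.Tendsto ffun Filter.atTop (nhds 0) ∧
    ∀ δ : ℝ, 0 < δ → δ < 1 → ∃! t : ℝ, 0 < t ∧ ffun t = δ / 2 := by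
  refine ⟨ffun_zero, ffun_anti, ffun_tendsto, ?_⟩
  intro δ hδ0 hδ1
  -- find T with ffun T < δ/2
  have hT' : ∀ᶠ t in atTop, ffun t < δ / 2 :=
    ffun_tendsto.eventually (eventually_lt_nhds (by linarith))
  obtain ⟨T, hT⟩ := (hT'.and (eventually_gt_atTop 0)).exists
  -- find c near 0 with ffun c > δ/2
  have hc' : ∀ᶠ x in nhds (0:ℝ), δ / 2 < ffun x := by
    have h0 : δ / 2 < ffun 0 := by rw [ffun_zero]; linarith
    exact (ffun_cont.continuousAt (x := 0)).eventually (eventually_gt_nhds h0)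
  obtain ⟨ε, hε0, hε⟩ := Metric.eventually_nhds_iff.1 hc'
  set c : ℝ := min (ε / 2) (T / 2) with hc_def
  have hc0 : 0 < c := lt_min (by linarith) (by linarith [hT.2])
  have hcT : c ≤ T := le_trans (min_le_right _ _) (by linarith [hT.2])
  have hfc : δ / 2 < ffun c := by
    apply hε
    rw [Real.dist_eq, sub_zero, abs_of_pos hc0]
    calc c ≤ ε / 2 := min_le_left _ _
      _ < ε := by linarith
  -- intermediate value theorem on [c, T]
  have hivt := intermediate_value_Icc' hcT (ffun_cont.continuousOn (s := Icc c T))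
  have hmem : δ / 2 ∈ Icc (ffun T) (ffun c) := ⟨(hT.1).le, hfc.le⟩
  obtain ⟨t, htmem, hteq⟩ := hivt hmem
  have ht0 : 0 < t := lt_of_lt_of_le hc0 htmem.1
  refine ⟨t, ⟨ht0, hteq⟩, ?_⟩
  rintro y ⟨hy0, hyeq⟩
  exact ffun_anti.injOn hy0 ht0 (by rw [hyeq, hteq])
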